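/- Every Šoltés graph on at least 2 vertices contains a cycle of length at least 5; that is, if G is a finite connected simple graph with at least 2 vertices such that every vertex of G is good, then G has a cycle of length at least 5. -/

import Mathlib

open SimpleGraph

/-- The Wiener index: sum of distances over unordered pairs of vertices. -/
noncomputable def wiener {V : Type*} [Fintype V] (G : SimpleGraph V) : ℕ :=
  (∑ u : V, ∑ v : V, G.dist u v) / 2

/-- The transmission of a vertex: sum of distances to all vertices. -/
noncomputable def transmission {V : Type*} [Fintype V] (G : SimpleGraph V) (v : V) : ℕ :=
  ∑ u : V, G.dist v u

/-- The graph `G - v`: induced subgraph on the vertices distinct from `v`. -/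
def delVert {V : Type*} (G : SimpleGraph V) (v : V) : SimpleGraph {u : V // u ≠ v} :=
  SimpleGraph.comap Subtype.val G

/-- A vertex is good if `G - v` is connected and has the same Wiener index as `G`. -/
def good {V : Type*} [Fintype V] [DecidableEq V] (G : SimpleGraph V) (v : V) : Prop :=
  (delVert G v).Connected ∧ wiener (delVert G v) = wiener G

section Aux

variable {V : Type*} {G : SimpleGraph V} {v : V}

/-- The embedding of `G - v` into `G`. -/
def delVertEmb (G : SimpleGraph V) (v : V) : delVert G v ↪g G :=
  { toFun := Subtype.val, inj' := Subtype.val_injective, map_rel_iff' := Iff.rfl }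

lemma lift_walk : ∀ {a b : V} (p : G.Walk a b), v ∉ p.support → ∀ (ha : a ≠ v) (hb : b ≠ v),
    ∃ q : (delVert G v).Walk ⟨a, ha⟩ ⟨b, hb⟩, q.length = p.length := by
  intro a b p
  induction p with
  | nil => intro _ ha hb; exact ⟨SimpleGraph.Walk.nil, rfl⟩
  | @cons a c b h p ih =>
    intro hp ha hb
    have hp' : v ∉ p.support := fun hv => hp
      (by rw [SimpleGraph.Walk.support_cons]; exact List.mem_cons_of_mem _ hv)
    have hc : c ≠ v := fun hcv => hp' (hcv ▸ p.start_mem_support)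
    obtain ⟨q, hq⟩ := ih hp' hc hb
    exact ⟨SimpleGraph.Walk.cons (by exact h : (delVert G v).Adj ⟨a, ha⟩ ⟨c, hc⟩) q,
      congrArg (· + 1) hq⟩

lemma dist_le_dist_del (hc : (delVert G v).Connected) (u w : {x : V // x ≠ v}) :
    G.dist ↑u ↑w ≤ (delVert G v).dist u w := by
  obtain ⟨p, hp⟩ := hc.exists_walk_length_eq_dist u w
  calc G.dist ↑u ↑w ≤ (p.map (delVertEmb G v).toHom).length := SimpleGraph.dist_le _
    _ = (delVert G v).dist u w := by rw [SimpleGraph.Walk.length_map, hp]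

lemma sum_split [Fintype V] [DecidableEq V] (f : V → ℕ) :
    ∑ x : V, f x = f v + ∑ x : {u : V // u ≠ v}, f ↑x := by
  rw [← Finset.add_sum_erase Finset.univ f (Finset.mem_univ v)]
  congr 1
  exact Finset.sum_subtype (p := fun x => x ≠ v) (Finset.univ.erase v) (by simp) f

end Aux

/-- Every Šoltés graph on at least 2 vertices contains a cycle of length at least 5. -/
theorem soltes_graph_has_long_cycle {V : Type*} [Fintype V] [DecidableEq V]
    (G : SimpleGraph V) (hG : G.Connected) (hcard : 2 ≤ Fintype.card V)
    (hsoltes : ∀ v : V, good G v) :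
    ∃ (u : V) (w : G.Walk u u), w.IsCycle ∧ 5 ≤ w.length := by
  classical
  have hne : Nonempty V := Fintype.card_pos_iff.mp (by omega)
  obtain ⟨v⟩ := hne
  obtain ⟨hconn, hW⟩ := hsoltes v
  -- transmission is positive
  have ht : 1 ≤ transmission G v := by
    obtain ⟨u0, hu0⟩ := Fintype.exists_ne_of_one_lt_card (by omega) v
    have h1 : 0 < G.dist v u0 := hG.pos_dist_of_ne (Ne.symm hu0)
    calc 1 ≤ G.dist v u0 := h1
      _ ≤ transmission G v := Finset.single_le_sum (fun i _ => Nat.zero_le _) (Finset.mem_univ u0)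
  -- there is a pair whose distance strictly increases
  have hstrict : ∃ u w : {x : V // x ≠ v},
      G.dist (↑u) (↑w) < (delVert G v).dist u w := by
    by_contra hno
    push_neg at hno
    have heq : ∀ u w : {x : V // x ≠ v}, (delVert G v).dist u w = G.dist ↑u ↑w :=
      fun u w => le_antisymm (hno u w) (dist_le_dist_del hconn u w)
    set S : ℕ := ∑ u : {x : V // x ≠ v}, ∑ w : {x : V // x ≠ v}, G.dist ↑u ↑w with hS
    have hT : ∑ u : V, ∑ w : V, G.dist u w = S + 2 * transmission G v := by
      have h1 : ∀ u : V, ∑ w : V, G.dist u w = G.dist u v + ∑ w : {x : V // x ≠ v}, G.dist u ↑w :=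
        fun u => sum_split _
      calc ∑ u : V, ∑ w : V, G.dist u w
          = ∑ u : V, (G.dist u v + ∑ w : {x : V // x ≠ v}, G.dist u ↑w) := by
            exact Finset.sum_congr rfl fun u _ => h1 u
        _ = (∑ u : V, G.dist u v) + ∑ u : V, ∑ w : {x : V // x ≠ v}, G.dist u ↑w := by
            rw [Finset.sum_add_distrib]
        _ = transmission G v + ((∑ w : {x : V // x ≠ v}, G.dist v ↑w) + S) := by
            congr 1
            · unfold transmission; exact Finset.sum_congr rfl fun u _ => SimpleGraph.dist_comm
            · exact sum_split _
        _ = S + 2 * transmission G v := by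
            have : (∑ w : {x : V // x ≠ v}, G.dist v ↑w) = transmission G v := by
              unfold transmission
              rw [sum_split (v := v) (fun w => G.dist v w)]
              simp [SimpleGraph.dist_self]
            rw [this]; ring
    have hwG : wiener G = S / 2 + transmission G v := by
      unfold wiener
      rw [hT, Nat.add_mul_div_left _ _ (by norm_num : (0:ℕ) < 2)]
    have hwD : wiener (delVert G v) = S / 2 := by
      unfold wiener
      congr 1
      exact Finset.sum_congr rfl fun u _ => Finset.sum_congr rfl fun w _ => heq u w
    rw [hwD, hwG] at hW
    omega
  obtain ⟨u, w, hlt⟩ := hstrict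
  -- a path in G realizing the distance
  obtain ⟨P, hPpath, hPlen⟩ := hG.exists_path_of_dist (↑u) (↑w)
  -- v must be on P
  have hvP : v ∈ P.support := by
    by_contra hvP
    obtain ⟨q, hq⟩ := lift_walk P hvP u.2 w.2
    have : (delVert G v).dist u w ≤ G.dist ↑u ↑w := by
      calc (delVert G v).dist u w ≤ q.length := SimpleGraph.dist_le q
        _ = P.length := hq
        _ = G.dist ↑u ↑w := hPlen
    omega
  -- split P at v
  set P1 := P.takeUntil v hvP with hP1
  set P2 := P.dropUntil v hvP with hP2
  have hsplit : P1.append P2 = P := P.take_spec hvP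
  have hP1path : P1.IsPath := hPpath.takeUntil hvP
  have hP2path : P2.IsPath := hPpath.dropUntil hvP
  have hlensum : P1.length + P2.length = G.dist ↑u ↑w := by
    rw [← hPlen, ← hsplit, SimpleGraph.Walk.length_append]
  -- decompose P1.reverse and P2 as cons
  obtain ⟨a, hva, Q1, hQ1⟩ := SimpleGraph.Walk.exists_eq_cons_of_ne
    (fun h => u.2 h.symm : v ≠ ↑u) P1.reverse
  obtain ⟨b, hvb, Q2, hQ2⟩ := SimpleGraph.Walk.exists_eq_cons_of_ne
    (fun h => w.2 h.symm : v ≠ ↑w) P2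
  have hP1r : P1.reverse.IsPath := hP1path.reverse
  rw [hQ1] at hP1r
  rw [SimpleGraph.Walk.cons_isPath_iff] at hP1r
  obtain ⟨hQ1path, hvQ1⟩ := hP1r
  have hP2' := hP2path
  rw [hQ2, SimpleGraph.Walk.cons_isPath_iff] at hP2'
  obtain ⟨hQ2path, hvQ2⟩ := hP2'
  have ha : a ≠ v := fun h => hvQ1 (h ▸ Q1.start_mem_support)
  have hb : b ≠ v := fun h => hvQ2 (h ▸ Q2.start_mem_support)
  have hQ1len : Q1.length + 1 = P1.length := by
    have := congrArg SimpleGraph.Walk.length hQ1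
    simpa [Nat.add_comm] using this.symm
  have hQ2len : Q2.length + 1 = P2.length := by
    have := congrArg SimpleGraph.Walk.length hQ2
    simpa [Nat.add_comm] using this.symm
  -- key: distance from a to b in G - v is at least 3
  have hkey : 3 ≤ (delVert G v).dist ⟨a, ha⟩ ⟨b, hb⟩ := by
    by_contra hle
    push_neg at hle
    obtain ⟨R, hRlen⟩ := hconn.exists_walk_length_eq_dist ⟨a, ha⟩ ⟨b, hb⟩
    set R' := R.map (delVertEmb G v).toHom with hR'
    have hvR' : v ∉ R'.support := by
      rw [hR', SimpleGraph.Walk.support_map]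
      intro hv
      obtain ⟨x, _, hx⟩ := List.mem_map.mp hv
      exact x.2 hx
    -- splice walk from u to w avoiding v
    set Wk := Q1.reverse.append (R'.append Q2) with hWk
    have hvWk : v ∉ Wk.support := by
      rw [hWk]
      intro hv
      erw [SimpleGraph.Walk.mem_support_append_iff] at hv
      rcases hv with hv | hv
      · rw [SimpleGraph.Walk.support_reverse, List.mem_reverse] at hv; exact hvQ1 hv
      · erw [SimpleGraph.Walk.mem_support_append_iff] at hv
        rcases hv with hv | hv
        · exact hvR' hv
        · exact hvQ2 hv
    obtain ⟨q, hq⟩ := lift_walk Wk hvWk u.2 w.2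
    have hqle : q.length ≤ G.dist ↑u ↑w := by
      have hl : Wk.length = Q1.reverse.length + (R'.length + Q2.length) := by
        rw [hWk]
        exact (SimpleGraph.Walk.length_append _ _).trans
          (congrArg (Q1.reverse.length + ·) (SimpleGraph.Walk.length_append _ _))
      rw [hq, hl, SimpleGraph.Walk.length_reverse]
      have hR'len : R'.length ≤ 2 := by
        rw [hR', SimpleGraph.Walk.length_map, hRlen]; omega
      omega
    have : (delVert G v).dist u w ≤ G.dist ↑u ↑w :=
      le_trans (SimpleGraph.dist_le q) hqle
    omega
  -- a ≠ b
  have hab : a ≠ b := by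
    intro h
    have : (⟨a, ha⟩ : {x : V // x ≠ v}) = ⟨b, hb⟩ := Subtype.ext h
    rw [this] at hkey
    simp [SimpleGraph.dist_self] at hkey
  -- shortest path from a to b in G - v, mapped to G
  obtain ⟨R, hRpath, hRlen⟩ := hconn.exists_path_of_dist ⟨a, ha⟩ ⟨b, hb⟩
  set R' := R.map (delVertEmb G v).toHom with hR'
  have hR'path : R'.IsPath := SimpleGraph.Walk.map_isPath_of_injective
    Subtype.val_injective hRpath
  have hvR' : v ∉ R'.support := by
    rw [hR', SimpleGraph.Walk.support_map]
    intro hv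
    obtain ⟨x, _, hx⟩ := List.mem_map.mp hv
    exact x.2 hx
  have hR'len : 3 ≤ R'.length := by
    rw [hR', SimpleGraph.Walk.length_map, hRlen]; exact hkey
  -- build the cycle
  have hbv : G.Adj ((delVertEmb G v).toHom ⟨b, hb⟩) v := hvb.symm
  refine ⟨v, SimpleGraph.Walk.cons (@id (G.Adj v ((delVertEmb G v).toHom ⟨a, ha⟩)) hva) (R'.concat hbv), ?_, ?_⟩
  · rw [SimpleGraph.Walk.cons_isCycle_iff]
    constructor
    · rw [SimpleGraph.Walk.isPath_def, SimpleGraph.Walk.support_concat]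
      rw [List.nodup_append]
      refine ⟨hR'path.support_nodup, List.nodup_singleton v, ?_⟩
      intro x hx y hy hxy
      rw [List.mem_singleton] at hy
      subst hy; subst hxy; exact hvR' hx
    · rw [SimpleGraph.Walk.edges_concat]
      intro hmem
      rw [List.concat_eq_append, List.mem_append, List.mem_singleton] at hmem
      rcases hmem with hmem | hmem
      · exact hvR' (R'.fst_mem_support_of_mem_edges hmem)
      · rw [Sym2.eq_iff] at hmem
        rcases hmem with ⟨h1, h2⟩ | ⟨h1, h2⟩
        · exact hb h1.symm
        · exact hab h2
  · rw [SimpleGraph.Walk.length_cons, SimpleGraph.Walk.length_concat]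
    omega
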